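/- For any word W in two letters and any 2-by-2 Hermitian positive definite matrices A and B, both eigenvalues of W(A,B) are positive. -/

import Mathlib

open Matrix ComplexOrder

lemma quadPos {p q r s : ℝ} (hp : 0 ≤ p) (hq : 0 ≤ q) (hr : 0 ≤ r) (hs : 0 ≤ s)
    (hd : 0 < p*s - q*r) (μ : ℂ) (heq : (μ - p)*(μ - s) - q*r = 0) : μ.im = 0 ∧ 0 < μ.re := by
  have hre := congrArg Complex.re heq
  have him := congrArg Complex.im heq
  simp [Complex.mul_re, Complex.mul_im, Complex.sub_re, Complex.sub_im] at hre him
  have hy : μ.im = 0 := by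
    rcases mul_eq_zero.mp (show μ.im * ((μ.re - s) + (μ.re - p)) = 0 by nlinarith [him]) with h | h
    · exact h
    · nlinarith [sq_nonneg μ.im, sq_nonneg (p - s)]
  refine ⟨hy, ?_⟩
  rw [hy] at hre
  nlinarith [sq_nonneg μ.re]

/-- matrix with columns `p`, `q`. -/
def colMat (p q : Fin 2 → ℂ) : Matrix (Fin 2) (Fin 2) ℂ := Matrix.of fun i j => ![p, q] j i

lemma colMat_mul_right (p q : Fin 2 → ℂ) {X : Matrix (Fin 2) (Fin 2) ℂ}
    {M : Matrix (Fin 2) (Fin 2) ℝ}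
    (h1 : X *ᵥ p = ((M 0 0 : ℝ) : ℂ) • p + ((M 1 0 : ℝ) : ℂ) • q)
    (h2 : X *ᵥ q = ((M 0 1 : ℝ) : ℂ) • p + ((M 1 1 : ℝ) : ℂ) • q) :
    X * colMat p q = colMat p q * M.map (Complex.ofReal) := by
  ext i j
  have e1 := congrFun h1 i
  have e2 := congrFun h2 i
  simp only [mulVec, dotProduct, Fin.sum_univ_two, Pi.add_apply, Pi.smul_apply,
    smul_eq_mul] at e1 e2
  fin_cases j
  · simp only [colMat, mul_apply, Fin.sum_univ_two, Matrix.map_apply, Matrix.of_apply,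
      Matrix.cons_val_zero, Matrix.cons_val_one, Matrix.head_cons, Fin.isValue, Fin.mk_zero, Fin.mk_one]
    linear_combination e1
  · simp only [colMat, mul_apply, Fin.sum_univ_two, Matrix.map_apply, Matrix.of_apply,
      Matrix.cons_val_zero, Matrix.cons_val_one, Matrix.head_cons, Fin.isValue, Fin.mk_zero, Fin.mk_one]
    linear_combination e2

noncomputable def orthv (u : Fin 2 → ℂ) : Fin 2 → ℂ :=
  ![-(starRingEnd ℂ) (u 1), (starRingEnd ℂ) (u 0)]

lemma decomp_mulVec (l : ℝ) (u x : Fin 2 → ℂ) :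
    ((l : ℂ) • 1 + vecMulVec u (star u)) *ᵥ x = (l : ℂ) • x + (star u ⬝ᵥ x) • u := by
  ext i
  fin_cases i <;>
    simp [mulVec, dotProduct, vecMulVec_apply, Fin.sum_univ_two, Matrix.one_apply,
      Matrix.add_apply, Matrix.smul_apply] <;> ring

lemma dot_orthv_self (u : Fin 2 → ℂ) : star u ⬝ᵥ orthv u = 0 := by
  simp [dotProduct, orthv, Fin.sum_univ_two, Pi.star_apply]
  ring

lemma dot_orthv (u v : Fin 2 → ℂ) :
    star v ⬝ᵥ orthv u = (starRingEnd ℂ) (u 0 * v 1 - u 1 * v 0) := by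
  simp [dotProduct, orthv, Fin.sum_univ_two, Pi.star_apply, map_sub, _root_.map_mul]
  ring

lemma dot_self_eq (u : Fin 2 → ℂ) :
    star u ⬝ᵥ u = ((Complex.normSq (u 0) + Complex.normSq (u 1) : ℝ) : ℂ) := by
  simp [dotProduct, Fin.sum_univ_two, Pi.star_apply, Complex.normSq_eq_conj_mul_self]

lemma normSq_sum_pos {u : Fin 2 → ℂ} (hu : u ≠ 0) :
    0 < Complex.normSq (u 0) + Complex.normSq (u 1) := by
  rcases (by simpa [funext_iff, Fin.forall_fin_two] using hu :
      ¬(u 0 = 0 ∧ u 1 = 0)) with h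
  rcases eq_or_ne (u 0) 0 with h0 | h0
  · have h1 : u 1 ≠ 0 := fun h1 => h ⟨h0, h1⟩
    have := Complex.normSq_pos.mpr h1
    nlinarith [Complex.normSq_nonneg (u 0)]
  · have := Complex.normSq_pos.mpr h0
    nlinarith [Complex.normSq_nonneg (u 1)]

lemma span_of_cross_eq_zero {u v : Fin 2 → ℂ} (h : u 0 * v 1 - u 1 * v 0 = 0) (i : Fin 2) :
    ((Complex.normSq (u 0) + Complex.normSq (u 1) : ℝ) : ℂ) * v i = (star u ⬝ᵥ v) * u i := by
  have hc : u 0 * v 1 = u 1 * v 0 := by linear_combination h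
  fin_cases i <;>
    push_cast [dotProduct, Fin.sum_univ_two, Pi.star_apply, Complex.star_def, Complex.normSq_eq_conj_mul_self]
  · linear_combination (-(starRingEnd ℂ) (u 1)) * hc
  · linear_combination ((starRingEnd ℂ) (u 0)) * hc

lemma colMat_mul_right' (p q : Fin 2 → ℂ) {X : Matrix (Fin 2) (Fin 2) ℂ}
    (m00 m01 m10 m11 : ℝ)
    (h1 : X *ᵥ p = (m00 : ℂ) • p + (m10 : ℂ) • q)
    (h2 : X *ᵥ q = (m01 : ℂ) • p + (m11 : ℂ) • q) :
    X * colMat p q = colMat p q * (!![m00, m01; m10, m11]).map Complex.ofReal := by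
  apply colMat_mul_right <;> norm_num [h1, h2]

lemma phase_adjust (u v : Fin 2 → ℂ) :
    ∃ (v' : Fin 2 → ℂ) (c : ℝ), 0 ≤ c ∧ star u ⬝ᵥ v' = (c : ℂ) ∧
      Matrix.vecMulVec v' (star v') = Matrix.vecMulVec v (star v) ∧ (v' = 0 ↔ v = 0) := by
  set c0 : ℂ := star u ⬝ᵥ v with hc0
  by_cases hc : c0 = 0
  · exact ⟨v, 0, le_refl _, by simp [← hc0, hc], rfl, Iff.rfl⟩
  · set e : ℂ := (starRingEnd ℂ) c0 / (‖c0‖ : ℂ) with he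
    have habs : (‖c0‖ : ℂ) ≠ 0 := by
      simpa using (norm_ne_zero_iff.mpr hc)
    have hee : e * (starRingEnd ℂ) e = 1 := by
      rw [he, map_div₀, Complex.conj_conj, Complex.conj_ofReal]
      field_simp
      rw [mul_comm _ c0, Complex.mul_conj]
      norm_cast
      rw [← Complex.sq_norm c0]
    refine ⟨e • v, ‖c0‖, norm_nonneg _, ?_, ?_, ?_⟩
    · rw [dotProduct_smul, ← hc0, he, smul_eq_mul]
      field_simp
      rw [mul_comm _ c0, Complex.mul_conj]
      norm_cast
      rw [← Complex.sq_norm c0]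
    · ext i j
      simp only [vecMulVec_apply, Pi.smul_apply, Pi.star_apply, smul_eq_mul, star_mul']
      calc e * v i * ((starRingEnd ℂ) e * (starRingEnd ℂ) (v j))
          = (e * (starRingEnd ℂ) e) * (v i * (starRingEnd ℂ) (v j)) := by ring
        _ = v i * star (v j) := by rw [hee, one_mul]; rfl
    · constructor
      · intro h
        have : v = e⁻¹ • (0 : Fin 2 → ℂ) := by
          rw [← h, smul_smul, inv_mul_cancel₀ (by
            intro h0
            rw [h0, zero_mul] at hee
            exact zero_ne_one hee), one_smul]
        simpa using this
      · intro h; rw [h, smul_zero]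

lemma posDef_decomp {A : Matrix (Fin 2) (Fin 2) ℂ} (hA : A.PosDef) :
    ∃ (l : ℝ) (u : Fin 2 → ℂ), 0 < l ∧ A = (l : ℂ) • 1 + vecMulVec u (star u) := by
  have h00 : 0 < A 0 0 := by
    have h := hA.dotProduct_mulVec_pos (x := ![1, 0]) (fun h => by simpa using congrFun h 0)
    simpa [dotProduct, mulVec, Fin.sum_univ_two] using h
  have h11 : 0 < A 1 1 := by
    have h := hA.dotProduct_mulVec_pos (x := ![0, 1]) (fun h => by simpa using congrFun h 1)
    simpa [dotProduct, mulVec, Fin.sum_univ_two] using h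
  set a : ℝ := (A 0 0).re with ha'
  set d : ℝ := (A 1 1).re with hd'
  set z : ℂ := A 0 1 with hz'
  have hA00 : A 0 0 = (a : ℂ) := by
    rw [Complex.lt_def] at h00
    exact Complex.ext rfl (by simpa using h00.2.symm)
  have hA11 : A 1 1 = (d : ℂ) := by
    rw [Complex.lt_def] at h11
    exact Complex.ext rfl (by simpa using h11.2.symm)
  have hA10 : A 1 0 = (starRingEnd ℂ) z := by
    have h := congrFun (congrFun hA.1 1) 0
    rw [conjTranspose_apply] at h
    exact h.symm
  have ha : 0 < a := by rw [Complex.lt_def] at h00; simpa using h00.1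
  have hd : 0 < d := by rw [Complex.lt_def] at h11; simpa using h11.1
  have hDet : 0 < a * d - ‖z‖ ^ 2 := by
    have h := hA.det_pos
    rw [det_fin_two, hA00, hA11, hA10, Complex.mul_conj', Complex.lt_def] at h
    have h1 := h.1
    simpa [Complex.sub_re, Complex.mul_re, ← Complex.ofReal_pow] using h1
  have hnsq : 0 ≤ ‖z‖ ^ 2 := sq_nonneg _
  set disc : ℝ := (a - d) ^ 2 + 4 * ‖z‖ ^ 2 with hdisc'
  have hdisc0 : 0 ≤ disc := by positivity
  set s : ℝ := Real.sqrt disc with hs'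
  have hs0 : 0 ≤ s := Real.sqrt_nonneg _
  have hs2 : s ^ 2 = disc := Real.sq_sqrt hdisc0
  set l : ℝ := ((a + d) - s) / 2 with hl'
  have hlpos : 0 < l := by
    rw [hl']
    nlinarith [hs2, hs0, hDet]
  have hla : 0 ≤ a - l := by
    rw [hl']
    nlinarith [hs2, hs0, hnsq]
  have hld : 0 ≤ d - l := by
    rw [hl']
    nlinarith [hs2, hs0, hnsq]
  have hkey : (a - l) * (d - l) = ‖z‖ ^ 2 := by
    rw [hl']
    linear_combination hs2 / 4
  by_cases hz : a - l = 0
  · have hz0 : z = 0 := by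
      have h : ‖z‖ ^ 2 = 0 := by rw [← hkey, hz, zero_mul]
      simpa using h
    refine ⟨l, ![0, (Real.sqrt (d - l) : ℂ)], hlpos, ?_⟩
    have hal : a = l := by linarith
    have hsq : ((Real.sqrt (d - l) : ℝ) : ℂ) * ((Real.sqrt (d - l) : ℝ) : ℂ)
        = ((d : ℂ) - (l : ℂ)) := by
      rw [← Complex.ofReal_mul, Real.mul_self_sqrt hld]
      push_cast
      ring
    ext i j
    rw [Matrix.add_apply, vecMulVec_apply]
    fin_cases i <;> fin_cases j <;>
      simp [vecMulVec_apply, Matrix.one_apply, Matrix.add_apply, Matrix.smul_apply, hA00, hA11, hA10, ← hz', hz0, hal,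
        Complex.conj_ofReal]
    linear_combination -hsq
  · have haz : 0 < a - l := lt_of_le_of_ne hla (Ne.symm hz)
    set r : ℝ := Real.sqrt (a - l) with hr'
    have hr : 0 < r := Real.sqrt_pos.mpr haz
    have hrne : (r : ℂ) ≠ 0 := by exact_mod_cast hr.ne'
    have hr2 : (r : ℂ) * (r : ℂ) = ((a : ℂ) - (l : ℂ)) := by
      rw [← Complex.ofReal_mul, Real.mul_self_sqrt hla]
      push_cast
      ring
    have hzz : (starRingEnd ℂ) z * z = ((a : ℂ) - l) * ((d : ℂ) - l) := by
      rw [mul_comm, Complex.mul_conj]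
      have : Complex.normSq z = (a - l) * (d - l) := by rw [← Complex.sq_norm, ← hkey]
      rw [this]
      push_cast
      ring
    refine ⟨l, ![(r : ℂ), (starRingEnd ℂ) z / r], hlpos, ?_⟩
    ext i j
    rw [Matrix.add_apply, vecMulVec_apply]
    fin_cases i <;> fin_cases j <;>
      simp [vecMulVec_apply, Matrix.one_apply, Matrix.add_apply, Matrix.smul_apply, hA00, hA11, hA10, ← hz',
        Complex.conj_ofReal, map_div₀]
    · linear_combination -hr2
    · field_simp
    · field_simp
    · rw [div_mul_div_comm, hzz, hr2]
      have hane : (a : ℂ) - l ≠ 0 := by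
        intro h
        exact hz (by exact_mod_cast congrArg Complex.re h)
      field_simp
      ring

def RepBy (P X : Matrix (Fin 2) (Fin 2) ℂ) : Prop :=
  ∃ M : Matrix (Fin 2) (Fin 2) ℝ, (∀ i j, 0 ≤ M i j) ∧ X * P = P * M.map Complex.ofReal

lemma RepBy.one (P : Matrix (Fin 2) (Fin 2) ℂ) : RepBy P 1 := by
  refine ⟨1, fun i j => ?_, by simp [Matrix.map_one]⟩
  by_cases h : i = j <;> simp [Matrix.one_apply, h]

lemma RepBy.mul {P X Y : Matrix (Fin 2) (Fin 2) ℂ} (hX : RepBy P X) (hY : RepBy P Y) :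
    RepBy P (X * Y) := by
  obtain ⟨M, hM, hXP⟩ := hX
  obtain ⟨N, hN, hYP⟩ := hY
  refine ⟨M * N, fun i j => ?_, ?_⟩
  · rw [Matrix.mul_apply]
    exact Finset.sum_nonneg fun k _ => mul_nonneg (hM i k) (hN k j)
  · have hmap : (M * N).map Complex.ofReal = M.map Complex.ofReal * N.map Complex.ofReal :=
      Matrix.map_mul (f := Complex.ofRealHom)
    rw [hmap, mul_assoc, hYP, ← mul_assoc, hXP, mul_assoc]

lemma spec_pos {W P : Matrix (Fin 2) (Fin 2) ℂ} (hdP : P.det ≠ 0) (hW : RepBy P W)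
    (hdW : 0 < W.det) : ∀ μ ∈ spectrum ℂ W, μ.im = 0 ∧ 0 < μ.re := by
  obtain ⟨M, hM, hWP⟩ := hW
  have hdet : W.det * P.det = P.det * ((M.det : ℝ) : ℂ) := by
    have h := congrArg Matrix.det hWP
    rw [det_mul, det_mul] at h
    rw [h]
    congr 1
    exact (RingHom.map_det Complex.ofRealHom M).symm
  have hMdet : ((M.det : ℝ) : ℂ) = W.det :=
    mul_right_cancel₀ hdP (by rw [mul_comm ((M.det : ℝ) : ℂ) P.det, ← hdet])
  have hMdpos : 0 < M.det := by
    rw [← hMdet, Complex.lt_def] at hdW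
    simpa using hdW.1
  intro μ hμ
  rw [spectrum.mem_iff, Algebra.algebraMap_eq_smul_one] at hμ
  have hsing : (μ • 1 - W).det = 0 := by
    by_contra h
    exact hμ ((Matrix.isUnit_iff_isUnit_det _).mpr (isUnit_iff_ne_zero.mpr h))
  have hcomm : (μ • 1 - W) * P = P * (μ • (1 : Matrix (Fin 2) (Fin 2) ℂ) - M.map Complex.ofReal) := by
    rw [sub_mul, mul_sub, hWP, smul_mul_assoc, one_mul, mul_smul_comm, mul_one]
  have hsing2 : (μ • (1 : Matrix (Fin 2) (Fin 2) ℂ) - M.map Complex.ofReal).det = 0 := by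
    have h := congrArg Matrix.det hcomm
    rw [det_mul, det_mul, hsing, zero_mul] at h
    rcases mul_eq_zero.mp h.symm with h' | h'
    · exact absurd h' hdP
    · exact h'
  rw [det_fin_two] at hsing2
  norm_num [Matrix.sub_apply, Matrix.smul_apply, Matrix.one_apply, Matrix.map_apply,
    Fin.ext_iff] at hsing2
  have heq : (μ - (M 0 0 : ℝ)) * (μ - (M 1 1 : ℝ)) - (M 0 1 : ℝ) * (M 1 0 : ℝ) = 0 := by
    linear_combination hsing2
  have hd : 0 < M 0 0 * M 1 1 - M 0 1 * M 1 0 := by rwa [det_fin_two] at hMdpos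
  exact quadPos (hM 0 0) (hM 0 1) (hM 1 0) (hM 1 1) hd μ heq

lemma repBy_scalar (P : Matrix (Fin 2) (Fin 2) ℂ) {l : ℝ} (hl : 0 ≤ l) :
    RepBy P ((l : ℂ) • 1) := by
  refine ⟨l • 1, fun i j => ?_, ?_⟩
  · by_cases h : i = j <;> simp [Matrix.smul_apply, Matrix.one_apply, h, hl]
  · have hmap : (l • (1 : Matrix (Fin 2) (Fin 2) ℝ)).map Complex.ofReal
        = (l : ℂ) • (1 : Matrix (Fin 2) (Fin 2) ℂ) := by
      ext i j
      by_cases h : i = j <;> simp [Matrix.map_apply, Matrix.smul_apply, Matrix.one_apply, h]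
    rw [hmap, smul_mul_assoc, one_mul, mul_smul_comm, mul_one]

lemma repBy_orth {X : Matrix (Fin 2) (Fin 2) ℂ} {l : ℝ} (hl : 0 ≤ l) (w : Fin 2 → ℂ)
    (hX : X = (l : ℂ) • 1 + vecMulVec w (star w)) :
    RepBy (colMat w (orthv w)) X := by
  set nw : ℝ := Complex.normSq (w 0) + Complex.normSq (w 1) with hnw
  have hnw0 : 0 ≤ nw := by
    have := Complex.normSq_nonneg (w 0); have := Complex.normSq_nonneg (w 1); linarith
  refine ⟨!![l + nw, 0; 0, l], ?_, ?_⟩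
  · intro i j
    fin_cases i <;> fin_cases j <;> simp [hl, hnw0] <;> linarith
  · apply colMat_mul_right' w (orthv w) (l + nw) 0 0 l
    · rw [hX, decomp_mulVec, dot_self_eq, ← hnw]
      push_cast
      module
    · rw [hX, decomp_mulVec, dot_orthv_self]
      push_cast
      module

lemma det_colMat (p q : Fin 2 → ℂ) : (colMat p q).det = p 0 * q 1 - q 0 * p 1 := by
  simp [colMat, det_fin_two]

lemma det_colMat_orthv {w : Fin 2 → ℂ} (hw : w ≠ 0) : (colMat w (orthv w)).det ≠ 0 := by
  rw [det_colMat]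
  have : w 0 * orthv w 1 - orthv w 0 * w 1
      = ((Complex.normSq (w 0) + Complex.normSq (w 1) : ℝ) : ℂ) := by
    simp [orthv, Complex.normSq_eq_conj_mul_self]
    push_cast [Complex.normSq_eq_conj_mul_self]
    ring
  rw [this]
  exact_mod_cast (normSq_sum_pos hw).ne'

lemma exists_rep {A B : Matrix (Fin 2) (Fin 2) ℂ} (hA : A.PosDef) (hB : B.PosDef) :
    ∃ P : Matrix (Fin 2) (Fin 2) ℂ, P.det ≠ 0 ∧ RepBy P A ∧ RepBy P B := by
  obtain ⟨la, u, hla, hAd⟩ := posDef_decomp hA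
  obtain ⟨lb, v0, hlb, hBd0⟩ := posDef_decomp hB
  obtain ⟨v, c, hc0, hcdot, hvv, hv0iff⟩ := phase_adjust u v0
  rw [← hvv] at hBd0
  set hBd := hBd0 with _hhB
  by_cases hu : u = 0
  · have hAs : A = (la : ℂ) • 1 := by
      rw [hAd, hu]
      have : vecMulVec (0 : Fin 2 → ℂ) (star (0 : Fin 2 → ℂ)) = 0 := by
        ext i j; simp [vecMulVec_apply]
      rw [this, add_zero]
    by_cases hv : v = 0
    · refine ⟨1, by simp, ?_, ?_⟩
      · rw [hAs]; exact repBy_scalar 1 hla.le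
      · have hBs : B = (lb : ℂ) • 1 := by
          rw [hBd, hv]
          have : vecMulVec (0 : Fin 2 → ℂ) (star (0 : Fin 2 → ℂ)) = 0 := by
            ext i j; simp [vecMulVec_apply]
          rw [this, add_zero]
        rw [hBs]; exact repBy_scalar 1 hlb.le
    · refine ⟨colMat v (orthv v), det_colMat_orthv hv, ?_, repBy_orth hlb.le v hBd⟩
      rw [hAs]; exact repBy_scalar _ hla.le
  · by_cases hv : v = 0
    · have hBs : B = (lb : ℂ) • 1 := by
        rw [hBd, hv]
        have : vecMulVec (0 : Fin 2 → ℂ) (star (0 : Fin 2 → ℂ)) = 0 := by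
          ext i j; simp [vecMulVec_apply]
        rw [this, add_zero]
      refine ⟨colMat u (orthv u), det_colMat_orthv hu, repBy_orth hla.le u hAd, ?_⟩
      rw [hBs]; exact repBy_scalar _ hlb.le
    · set nu : ℝ := Complex.normSq (u 0) + Complex.normSq (u 1) with hnu
      have hnupos : 0 < nu := normSq_sum_pos hu
      have hstarvu : star v ⬝ᵥ u = (c : ℂ) := by
        have : star v ⬝ᵥ u = (starRingEnd ℂ) (star u ⬝ᵥ v) := by
          simp [dotProduct, Fin.sum_univ_two, Pi.star_apply, Complex.star_def, map_add,
            _root_.map_mul, Complex.conj_conj]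
          ring
        rw [this, hcdot, Complex.conj_ofReal]
      by_cases hcr : u 0 * v 1 - u 1 * v 0 = 0
      · -- v is parallel to u : use P = colMat u (orthv u)
        refine ⟨colMat u (orthv u), det_colMat_orthv hu, repBy_orth hla.le u hAd, ?_⟩
        have hnune : (nu : ℂ) ≠ 0 := by exact_mod_cast hnupos.ne'
        have hvc : ∀ i, (nu : ℂ) * v i = (c : ℂ) * u i := by
          intro i
          have h := span_of_cross_eq_zero hcr (u := u) (v := v) i
          rw [hcdot] at h
          rw [hnu]
          push_cast at h ⊢
          linear_combination h
        refine ⟨!![lb + c ^ 2 / nu, 0; 0, lb], ?_, ?_⟩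
        · intro i j
          fin_cases i <;> fin_cases j <;> simp [hlb.le] <;> try positivity
        · apply colMat_mul_right' u (orthv u) (lb + c ^ 2 / nu) 0 0 lb
          · rw [hBd, decomp_mulVec, hstarvu]
            ext i
            simp only [Pi.add_apply, Pi.smul_apply, smul_eq_mul]
            push_cast
            field_simp
            linear_combination (c : ℂ) * hvc i
          · rw [hBd, decomp_mulVec]
            have : star v ⬝ᵥ orthv u = 0 := by
              rw [dot_orthv, hcr, map_zero]
            rw [this]
            push_cast
            module
      · -- independent case : P = colMat u v
        refine ⟨colMat u v, ?_, ?_, ?_⟩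
        · rw [det_colMat]
          intro h
          exact hcr (by linear_combination h)
        · refine ⟨!![la + nu, c; 0, la], ?_, ?_⟩
          · intro i j
            fin_cases i <;> fin_cases j <;> simp [hla.le, hc0] <;> try positivity
          · apply colMat_mul_right' u v (la + nu) c 0 la
            · rw [hAd, decomp_mulVec, dot_self_eq, ← hnu]
              push_cast
              module
            · rw [hAd, decomp_mulVec, hcdot]
              push_cast
              module
        · set nv : ℝ := Complex.normSq (v 0) + Complex.normSq (v 1) with hnv
          have hnv0 : 0 < nv := normSq_sum_pos hv
          refine ⟨!![lb, 0; c, lb + nv], ?_, ?_⟩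
          · intro i j
            fin_cases i <;> fin_cases j <;> simp [hlb.le, hc0] <;> try positivity
          · apply colMat_mul_right' u v lb 0 c (lb + nv)
            · rw [hBd, decomp_mulVec, hstarvu]
            · rw [hBd, decomp_mulVec, dot_self_eq, ← hnv]
              push_cast
              module

/-- Evaluate a word over `{A,B}` (`false ↦ A`, `true ↦ B`) at two complex matrices. -/
noncomputable def wordEvalC (w : List Bool) (A B : Matrix (Fin 2) (Fin 2) ℂ) : Matrix (Fin 2) (Fin 2) ℂ :=
  (w.map (fun c => if c then B else A)).prod

lemma wordEvalC_nil (A B : Matrix (Fin 2) (Fin 2) ℂ) : wordEvalC [] A B = 1 := rfl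

lemma wordEvalC_cons (c : Bool) (w : List Bool) (A B : Matrix (Fin 2) (Fin 2) ℂ) :
    wordEvalC (c :: w) A B = (if c then B else A) * wordEvalC w A B := by
  simp [wordEvalC]

/-- Both eigenvalues of any word in two 2-by-2 Hermitian positive definite
matrices are positive. -/
theorem word_two_by_two_pos_eigenvalues (w : List Bool)
    (A B : Matrix (Fin 2) (Fin 2) ℂ) (hA : A.PosDef) (hB : B.PosDef) :
    ∀ μ ∈ spectrum ℂ (wordEvalC w A B), μ.im = 0 ∧ 0 < μ.re := by
  obtain ⟨P, hdP, hRA, hRB⟩ := exists_rep hA hB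
  have hdet : 0 < (wordEvalC w A B).det := by
    induction w with
    | nil => rw [wordEvalC_nil, det_one]; exact zero_lt_one
    | cons c w ih =>
        rw [wordEvalC_cons, det_mul]
        have hl : 0 < (if c then B else A).det := by
          cases c <;> simp [hA.det_pos, hB.det_pos]
        exact mul_pos hl ih
  have hrep : RepBy P (wordEvalC w A B) := by
    clear hdet
    induction w with
    | nil => rw [wordEvalC_nil]; exact RepBy.one P
    | cons c w ih =>
        rw [wordEvalC_cons]
        exact RepBy.mul (by cases c <;> simpa) ih
  exact spec_pos hdP hrep hdet
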